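/- arXiv:1810.09666 — 2 statements merged into one kernel-verified Lean document; each statement's English description precedes it below -/
import Mathlib

section
/- Let K ≥ 2, η > 0, n ≥ 1, and let ℓ_1, …, ℓ_n : {1,…,K} → [0,∞) be nonnegative loss vectors. Define weights w_{i,1} = 1 and w_{i,j+1} = w_{i,j}·exp(−η·ℓ_j(i)), and probabilities p_{i,j} = w_{i,j}/∑_{k=1}^K w_{k,j}. Then for every action k′ ∈ {1,…,K}: ∑_{j=1}^n ∑_{i=1}^K p_{i,j}·ℓ_j(i) − ∑_{j=1}^n ℓ_j(k′) ≤ log(K)/η + (η/2)·∑_{j=1}^n ∑_{i=1}^K p_{i,j}·ℓ_j(i)². -/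
open Finset

private lemma exp_neg_le_quad {x : ℝ} (hx : 0 ≤ x) :
    Real.exp (-x) ≤ 1 - x + x ^ 2 / 2 := by
  have key : 1 ≤ (1 - x + x ^ 2 / 2) * Real.exp x := by
    set f : ℝ → ℝ := fun t => (1 - t + t ^ 2 / 2) * Real.exp t with hf
    have hderiv : ∀ t : ℝ, HasDerivAt f (t ^ 2 / 2 * Real.exp t) t := by
      intro t
      have h1 : HasDerivAt (fun t : ℝ => 1 - t + t ^ 2 / 2) (-1 + 2 * t / 2) t := by
        exact (((hasDerivAt_id t).const_sub 1).add
          (((hasDerivAt_pow 2 t)).div_const 2)).congr_deriv (by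
            simp)
      have h2 := h1.mul (Real.hasDerivAt_exp t)
      exact h2.congr_deriv (by ring)
    have hmono : MonotoneOn f (Set.Ici (0:ℝ)) := by
      apply monotoneOn_of_deriv_nonneg (convex_Ici 0)
      · exact Continuous.continuousOn (by fun_prop)
      · exact fun t _ => (hderiv t).differentiableAt.differentiableWithinAt
      · intro t ht
        rw [(hderiv t).deriv]
        have ht' : (0:ℝ) < t := by simpa using ht
        positivity
    have := hmono Set.self_mem_Ici (Set.mem_Ici.mpr hx) hx
    simpa [f] using this
  have hE : (0:ℝ) < Real.exp x := Real.exp_pos x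
  have hm : Real.exp (-x) * Real.exp x = 1 := by
    rw [← Real.exp_add]; simp
  nlinarith [Real.exp_pos (-x)]

/-- **Regret bound for the exponential-weights scheme.**
Weights `w 1 i = 1`, `w (j+1) i = w j i * exp (-η * ℓ j i)`, probabilities
`p j i = w j i / ∑ k, w j k`.  For every action `k'`,
`∑_{j=1}^n ∑_i p j i · ℓ j i − ∑_{j=1}^n ℓ j k' ≤ log K / η + (η/2) ∑_{j=1}^n ∑_i p j i · ℓ j i²`. -/
theorem statement10 (K n : ℕ) (hK : 2 ≤ K) (hn : 1 ≤ n) (η : ℝ) (hη : 0 < η)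
    (ℓ : ℕ → Fin K → ℝ) (hℓ : ∀ j i, 0 ≤ ℓ j i)
    (w : ℕ → Fin K → ℝ)
    (hw1 : ∀ i, w 1 i = 1)
    (hwS : ∀ j, 1 ≤ j → ∀ i, w (j + 1) i = w j i * Real.exp (-η * ℓ j i))
    (k' : Fin K) :
    ∑ j ∈ Finset.Icc 1 n, ∑ i, (w j i / ∑ k, w j k) * ℓ j i
        - ∑ j ∈ Finset.Icc 1 n, ℓ j k'
      ≤ Real.log K / η
        + η / 2 * ∑ j ∈ Finset.Icc 1 n, ∑ i, (w j i / ∑ k, w j k) * (ℓ j i) ^ 2 := by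
  have hK0 : 0 < K := by omega
  haveI : NeZero K := ⟨by omega⟩
  -- positivity of weights
  have hpos : ∀ j, 1 ≤ j → ∀ i, 0 < w j i := by
    intro j hj
    induction j, hj using Nat.le_induction with
    | base => intro i; rw [hw1]; norm_num
    | succ m hm ih =>
      intro i
      rw [hwS m hm i]
      exact mul_pos (ih i) (Real.exp_pos _)
  have hWpos : ∀ j, 1 ≤ j → 0 < ∑ k, w j k :=
    fun j hj => Finset.sum_pos (fun i _ => hpos j hj i) Finset.univ_nonempty
  -- per-round bound
  have hstep : ∀ j, 1 ≤ j →
      Real.log (∑ k, w (j+1) k) ≤ Real.log (∑ k, w j k)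
        + (-η * ∑ i, (w j i / ∑ k, w j k) * ℓ j i
           + η^2/2 * ∑ i, (w j i / ∑ k, w j k) * (ℓ j i)^2) := by
    intro j hj
    set Wj := ∑ k, w j k with hWj
    have hWjpos : 0 < Wj := hWpos j hj
    set L := ∑ i, (w j i / Wj) * ℓ j i with hL
    set Q := ∑ i, (w j i / Wj) * (ℓ j i)^2 with hQ
    have hsumL : Wj * L = ∑ i, w j i * ℓ j i := by
      rw [hL, Finset.mul_sum]
      refine Finset.sum_congr rfl fun i _ => ?_
      field_simp
    have hsumQ : Wj * Q = ∑ i, w j i * (ℓ j i)^2 := by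
      rw [hQ, Finset.mul_sum]
      refine Finset.sum_congr rfl fun i _ => ?_
      field_simp
    have hWnext : (∑ k, w (j+1) k) ≤ Wj * (1 - η * L + η^2/2 * Q) := by
      have hle : ∀ i ∈ Finset.univ, w (j+1) i
          ≤ w j i * (1 - η * ℓ j i + (η * ℓ j i)^2 / 2) := by
        intro i _
        rw [hwS j hj i]
        have hx : 0 ≤ η * ℓ j i := mul_nonneg hη.le (hℓ j i)
        have := exp_neg_le_quad hx
        calc w j i * Real.exp (-η * ℓ j i)
            = w j i * Real.exp (-(η * ℓ j i)) := by ring_nf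
          _ ≤ w j i * (1 - η * ℓ j i + (η * ℓ j i)^2 / 2) :=
              mul_le_mul_of_nonneg_left this (hpos j hj i).le
      calc (∑ k, w (j+1) k)
          ≤ ∑ i, w j i * (1 - η * ℓ j i + (η * ℓ j i)^2 / 2) :=
            Finset.sum_le_sum hle
        _ = Wj - η * (Wj * L) + η^2/2 * (Wj * Q) := by
            rw [hsumL, hsumQ, hWj, Finset.mul_sum, Finset.mul_sum,
              ← Finset.sum_sub_distrib, ← Finset.sum_add_distrib]
            refine Finset.sum_congr rfl fun i _ => ?_
            ring
        _ = Wj * (1 - η * L + η^2/2 * Q) := by ring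
    have hWnextpos : 0 < ∑ k, w (j+1) k := hWpos (j+1) (by omega)
    have hcpos : 0 < 1 - η * L + η^2/2 * Q := by
      by_contra h
      push_neg at h
      have : Wj * (1 - η * L + η^2/2 * Q) ≤ 0 :=
        mul_nonpos_of_nonneg_of_nonpos hWjpos.le h
      linarith
    calc Real.log (∑ k, w (j+1) k)
        ≤ Real.log (Wj * (1 - η * L + η^2/2 * Q)) :=
          Real.log_le_log hWnextpos hWnext
      _ = Real.log Wj + Real.log (1 - η * L + η^2/2 * Q) := by
          rw [Real.log_mul hWjpos.ne' hcpos.ne']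
      _ ≤ Real.log Wj + ((1 - η * L + η^2/2 * Q) - 1) := by
          have := Real.log_le_sub_one_of_pos hcpos
          linarith
      _ = Real.log Wj + (-η * L + η^2/2 * Q) := by ring
  -- telescoping
  have htel : ∀ m : ℕ, Real.log (∑ k, w (m+1) k) - Real.log (∑ k, w 1 k)
      ≤ ∑ j ∈ Finset.Icc 1 m, (-η * ∑ i, (w j i / ∑ k, w j k) * ℓ j i
          + η^2/2 * ∑ i, (w j i / ∑ k, w j k) * (ℓ j i)^2) := by
    intro m
    induction m with
    | zero => simp
    | succ m ih =>
      rw [Finset.sum_Icc_succ_top (by omega)]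
      have := hstep (m+1) (by omega)
      linarith
  -- lower bound via action k'
  have hwk : ∀ m : ℕ, w (m+1) k' = Real.exp (-η * ∑ j ∈ Finset.Icc 1 m, ℓ j k') := by
    intro m
    induction m with
    | zero => simp [hw1]
    | succ m ih =>
      rw [hwS (m+1) (by omega) k', ih, ← Real.exp_add,
        Finset.sum_Icc_succ_top (by omega : 1 ≤ m + 1)]
      ring_nf
  have hlow : -η * ∑ j ∈ Finset.Icc 1 n, ℓ j k' ≤ Real.log (∑ k, w (n+1) k) := by
    have h1 : w (n+1) k' ≤ ∑ k, w (n+1) k :=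
      Finset.single_le_sum (fun i _ => (hpos (n+1) (by omega) i).le) (Finset.mem_univ k')
    have h2 : Real.log (w (n+1) k') ≤ Real.log (∑ k, w (n+1) k) :=
      Real.log_le_log (hpos (n+1) (by omega) k') h1
    rwa [hwk n, Real.log_exp] at h2
  have hW1 : Real.log (∑ k, w 1 k) = Real.log K := by
    congr 1
    simp [hw1]
  -- combine
  set A := ∑ j ∈ Finset.Icc 1 n, ∑ i, (w j i / ∑ k, w j k) * ℓ j i with hA
  set B := ∑ j ∈ Finset.Icc 1 n, ∑ i, (w j i / ∑ k, w j k) * (ℓ j i)^2 with hB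
  set S := ∑ j ∈ Finset.Icc 1 n, ℓ j k' with hS
  have hsplit : ∑ j ∈ Finset.Icc 1 n, (-η * ∑ i, (w j i / ∑ k, w j k) * ℓ j i
      + η^2/2 * ∑ i, (w j i / ∑ k, w j k) * (ℓ j i)^2) = -η * A + η^2/2 * B := by
    rw [hA, hB, Finset.sum_add_distrib, Finset.mul_sum, Finset.mul_sum]
  have hmain : -η * S - Real.log K ≤ -η * A + η^2/2 * B := by
    have h := htel n
    rw [hsplit, hW1] at h
    linarith [hlow]
  rw [← mul_le_mul_iff_right₀ hη]
  have hrhs : η * (Real.log K / η + η / 2 * B) = Real.log K + η^2/2 * B := by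
    field_simp
  rw [mul_sub, hrhs]
  linarith
end

section
/- Let n be a positive integer, B > 0, T > 0, let m_1, …, m_n ≥ 0, and let r_1, …, r_n be reals with 0 ≤ r_j ≤ B for all j and ∑_{j=1}^n r_j ≤ T. Let m_{(1)} ≥ m_{(2)} ≥ ⋯ ≥ m_{(n)} be the values m_1, …, m_n sorted in non-increasing order. Then ∑_{j=1}^n m_j·r_j² ≤ B²·∑_{t=1}^{min(n, ⌈T/B⌉)} m_{(t)}. -/
lemma sum_getD_range (l : List ℝ) :
    ∑ t ∈ Finset.range l.length, l.getD t 0 = l.sum := by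
  induction l with
  | nil => simp
  | cons a l ih =>
    rw [List.length_cons, Finset.sum_range_succ']
    simp only [List.getD_cons_succ, List.getD_cons_zero]
    rw [List.sum_cons, ih]; ring

/-- Deterministic optimization bound: if `0 ≤ r j ≤ B`, `∑ j, r j ≤ T`, and `m j ≥ 0`,
then `∑ j, m j · (r j)² ≤ B² · ∑_{t=1}^{min(n, ⌈T/B⌉)} m_{(t)}`, where
`m_{(1)} ≥ m_{(2)} ≥ ⋯` are the values `m j` sorted in non-increasing order. -/
theorem statement13 (n : ℕ) (hn : 1 ≤ n) (B T : ℝ) (hB : 0 < B) (hT : 0 < T)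
    (m r : Fin n → ℝ) (hm : ∀ j, 0 ≤ m j)
    (hr : ∀ j, r j ∈ Set.Icc (0 : ℝ) B) (hsum : ∑ j, r j ≤ T) :
    ∑ j, m j * (r j) ^ 2
      ≤ B ^ 2 * ∑ t ∈ Finset.range (min n ⌈T / B⌉₊),
          ((List.ofFn m).insertionSort (· ≥ ·)).getD t 0 := by
  set s : List ℝ := (List.ofFn m).insertionSort (· ≥ ·) with hs
  have hperm : s.Perm (List.ofFn m) := List.perm_insertionSort _ _
  have hlen : s.length = n := by rw [hperm.length_eq, List.length_ofFn]
  have hsort : s.Pairwise (· ≥ ·) := List.pairwise_insertionSort _ _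
  have hsum_eq : ∀ g : ℝ → ℝ,
      ∑ t ∈ Finset.range n, g (s.getD t 0) = ∑ j, g (m j) := by
    intro g
    have h1 : (s.map g).sum = ((List.ofFn m).map g).sum := (hperm.map g).sum_eq
    have h2 : ∑ t ∈ Finset.range n, g (s.getD t 0)
        = ∑ t ∈ Finset.range (s.map g).length, (s.map g).getD t 0 := by
      rw [List.length_map, hlen]
      refine Finset.sum_congr rfl fun t ht => ?_
      rw [Finset.mem_range] at ht
      have htl : t < s.length := hlen ▸ ht
      rw [List.getD_eq_getElem _ _ htl,
        List.getD_eq_getElem _ _ (by simpa using htl), List.getElem_map]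
    rw [h2, sum_getD_range, h1, List.map_ofFn, List.sum_ofFn]
    rfl
  have hsnn : ∀ t, t < n → 0 ≤ s.getD t 0 := by
    intro t ht
    have htl : t < s.length := hlen ▸ ht
    rw [List.getD_eq_getElem _ _ htl]
    have hmem : s[t] ∈ List.ofFn m := hperm.subset (List.getElem_mem htl)
    obtain ⟨i, hi⟩ := Set.mem_range.mp ((List.mem_ofFn' _ _).mp hmem)
    exact hi ▸ hm i
  have hmono : ∀ i j : ℕ, i ≤ j → j < n → s.getD j 0 ≤ s.getD i 0 := by
    intro i j hij hj
    have hjl : j < s.length := hlen ▸ hj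
    have hil : i < s.length := lt_of_le_of_lt hij hjl
    rw [List.getD_eq_getElem _ _ hjl, List.getD_eq_getElem _ _ hil]
    rcases eq_or_lt_of_le hij with h | h
    · subst h; exact le_refl _
    · exact hsort.rel_get_of_lt (a := ⟨i, hil⟩) (b := ⟨j, hjl⟩) h
  set k : ℕ := min n ⌈T / B⌉₊ with hk
  have hceil1 : 1 ≤ ⌈T / B⌉₊ := Nat.one_le_ceil_iff.mpr (div_pos hT hB)
  have hk1 : 1 ≤ k := le_min hn hceil1
  have hkn : k ≤ n := min_le_left _ _
  -- Key claim
  have key : ∑ j, m j * r j ≤ B * ∑ t ∈ Finset.range k, s.getD t 0 := by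
    rcases le_or_gt n ⌈T / B⌉₊ with hcase | hcase
    · -- k = n, trivial bound
      have hkn' : k = n := min_eq_left hcase
      have h1 : ∑ j, m j * r j ≤ ∑ j, m j * B :=
        Finset.sum_le_sum fun j _ => mul_le_mul_of_nonneg_left (hr j).2 (hm j)
      have h2 : ∑ t ∈ Finset.range n, s.getD t 0 = ∑ j, m j := hsum_eq (fun x => x)
      calc ∑ j, m j * r j ≤ ∑ j, m j * B := h1
        _ = B * ∑ t ∈ Finset.range k, s.getD t 0 := by
            rw [hkn', h2, ← Finset.sum_mul]; ring
    · -- k = ⌈T/B⌉₊ < n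
      have hkc : k = ⌈T / B⌉₊ := min_eq_right (le_of_lt hcase)
      have hkltn : k < n := hkc ▸ hcase
      have hTk : T ≤ (k : ℝ) * B := by
        have h := Nat.le_ceil (T / B)
        rw [hkc]
        calc T = (T / B) * B := by field_simp
          _ ≤ (⌈T / B⌉₊ : ℝ) * B := mul_le_mul_of_nonneg_right h (le_of_lt hB)
      set c : ℝ := s.getD (k - 1) 0 with hc
      have hc0 : 0 ≤ c := hsnn _ (lt_of_le_of_lt (Nat.sub_le _ _) hkltn)
      have hcle : ∀ t, t < k → c ≤ s.getD t 0 := fun t ht =>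
        hmono t (k - 1) (by omega) (by omega)
      have hcge : ∀ t, k ≤ t → t < n → s.getD t 0 ≤ c := fun t ht htn =>
        hmono (k - 1) t (by omega) htn
      have key2 : ∑ j, max (m j - c) 0
          = ∑ t ∈ Finset.range n, max (s.getD t 0 - c) 0 :=
        (hsum_eq (fun x => max (x - c) 0)).symm
      have key3 : ∑ t ∈ Finset.range n, max (s.getD t 0 - c) 0
          = ∑ t ∈ Finset.range k, (s.getD t 0 - c) := by
        rw [← Finset.sum_range_add_sum_Ico _ hkn]
        have h4 : ∑ t ∈ Finset.Ico k n, max (s.getD t 0 - c) 0 = 0 := by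
          refine Finset.sum_eq_zero fun t ht => ?_
          rw [Finset.mem_Ico] at ht
          exact max_eq_right (by linarith [hcge t ht.1 ht.2])
        have h5 : ∀ t ∈ Finset.range k, max (s.getD t 0 - c) 0 = s.getD t 0 - c := by
          intro t ht
          rw [Finset.mem_range] at ht
          exact max_eq_left (by linarith [hcle t ht])
        rw [h4, add_zero, Finset.sum_congr rfl h5]
      have pointwise : ∀ j, (m j - c) * r j ≤ max (m j - c) 0 * B := by
        intro j
        rcases le_or_gt c (m j) with h | h
        · rw [max_eq_left (by linarith)]
          exact mul_le_mul_of_nonneg_left (hr j).2 (by linarith)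
        · rw [max_eq_right (by linarith)]
          have := (hr j).1
          nlinarith
      calc ∑ j, m j * r j
          = ∑ j, (m j - c) * r j + c * ∑ j, r j := by
            rw [Finset.mul_sum, ← Finset.sum_add_distrib]
            exact Finset.sum_congr rfl fun j _ => by ring
        _ ≤ ∑ j, max (m j - c) 0 * B + c * T :=
            add_le_add (Finset.sum_le_sum fun j _ => pointwise j)
              (mul_le_mul_of_nonneg_left hsum hc0)
        _ = (∑ t ∈ Finset.range k, (s.getD t 0 - c)) * B + c * T := by
            rw [← Finset.sum_mul, key2, key3]
        _ ≤ (∑ t ∈ Finset.range k, (s.getD t 0 - c)) * B + c * ((k : ℝ) * B) :=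
            add_le_add_right (mul_le_mul_of_nonneg_left hTk hc0) _
        _ = B * ∑ t ∈ Finset.range k, s.getD t 0 := by
            rw [Finset.sum_sub_distrib, Finset.sum_const, Finset.card_range]
            ring
  -- conclude
  have stepA : ∑ j, m j * (r j) ^ 2 ≤ ∑ j, m j * (B * r j) := by
    refine Finset.sum_le_sum fun j _ => ?_
    have h1 := (hr j).1
    have h2 := (hr j).2
    have : (r j) ^ 2 ≤ B * r j := by nlinarith
    exact mul_le_mul_of_nonneg_left this (hm j)
  calc ∑ j, m j * (r j) ^ 2 ≤ ∑ j, m j * (B * r j) := stepA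
    _ = B * ∑ j, m j * r j := by
        rw [Finset.mul_sum]; exact Finset.sum_congr rfl fun j _ => by ring
    _ ≤ B * (B * ∑ t ∈ Finset.range k, s.getD t 0) :=
        mul_le_mul_of_nonneg_left key (le_of_lt hB)
    _ = B ^ 2 * ∑ t ∈ Finset.range k, s.getD t 0 := by ring
end
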